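/- Let k, l ≥ 1 be integers and b ∈ ℝ^l. Define for a ∈ ℝ^k the linear map f_a : ℤ^k → ℝ, u ↦ u·a, and h_b : ℤ^l → ℝ, v ↦ v·b. Then the set R = {a ∈ ℝ^k : ker(f_a) = {0} and f_a(ℤ^k) ∩ h_b(ℤ^l) = {0}} is a countable intersection of open dense subsets of ℝ^k (in particular, R is dense in ℝ^k by Baire's theorem). -/

import Mathlib

open Function Set

/-- The set of `a ∈ ℝᵏ` such that `u ↦ u·a` on `ℤᵏ` has trivial kernel and the images of
`ℤᵏ` under `u ↦ u·a` and of `ℤˡ` under `v ↦ v·b` intersect only in `0` is a countable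
intersection of open dense subsets of `ℝᵏ`. -/
theorem stmt0 (k l : ℕ) (hk : 1 ≤ k) (hl : 1 ≤ l) (b : Fin l → ℝ) :
    ∃ S : ℕ → Set (Fin k → ℝ),
      (∀ n, IsOpen (S n) ∧ Dense (S n)) ∧
      {a : Fin k → ℝ |
        (∀ u : Fin k → ℤ, (∑ i, (u i : ℝ) * a i) = 0 → u = 0) ∧
        (∀ (u : Fin k → ℤ) (v : Fin l → ℤ),
          (∑ i, (u i : ℝ) * a i) = (∑ j, (v j : ℝ) * b j) →
          (∑ i, (u i : ℝ) * a i) = 0)} = ⋂ n, S n := by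
  classical
  set I := {u : Fin k → ℤ // u ≠ 0} × (Fin l → ℤ) with hI
  have hne : Nonempty I := by
    refine ⟨⟨⟨Pi.single ⟨0, hk⟩ 1, ?_⟩, 0⟩⟩
    intro h
    have := congrFun h ⟨0, hk⟩
    simp [Pi.single_apply] at this
  obtain ⟨e, he⟩ := exists_surjective_nat I
  set T : I → Set (Fin k → ℝ) :=
    fun p => {a | (∑ i, ((p.1.1 i : ℝ)) * a i) ≠ ∑ j, ((p.2 j : ℝ)) * b j} with hT
  have key : ∀ p : I, IsOpen (T p) ∧ Dense (T p) := by
    rintro ⟨⟨u, hu⟩, v⟩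
    set c : ℝ := ∑ j, ((v j : ℝ)) * b j with hc
    set L0 : (Fin k → ℝ) →ₗ[ℝ] ℝ :=
      ∑ i, (u i : ℝ) • (LinearMap.proj i : (Fin k → ℝ) →ₗ[ℝ] ℝ) with hL0
    set L : (Fin k → ℝ) →L[ℝ] ℝ := LinearMap.toContinuousLinearMap L0 with hL
    have hLa : ∀ a : Fin k → ℝ, L a = ∑ i, (u i : ℝ) * a i := by
      intro a
      simp [hL, hL0, LinearMap.sum_apply]
    have hset : T (⟨⟨u, hu⟩, v⟩ : I) = L ⁻¹' {x | x ≠ c} := by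
      ext a; simp [hT, hLa, hc]
    have hsurj : Surjective L := by
      obtain ⟨i, hi⟩ : ∃ i, u i ≠ 0 := by
        by_contra h
        push_neg at h
        exact hu (funext fun i => h i)
      intro x
      refine ⟨Pi.single i (x / (u i : ℝ)), ?_⟩
      have hui : (u i : ℝ) ≠ 0 := Int.cast_ne_zero.mpr hi
      rw [hLa]
      rw [Finset.sum_eq_single i]
      · rw [Pi.single_eq_same]; field_simp
      · intro j _ hj; simp [Pi.single_apply, hj]
      · intro h; exact absurd (Finset.mem_univ i) h
    have hopenmap : IsOpenMap L := L.isOpenMap hsurj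
    constructor
    · rw [hset]; exact isOpen_ne.preimage L.continuous
    · rw [hset]
      exact (dense_compl_singleton c).preimage hopenmap
  refine ⟨fun n => T (e n), fun n => key (e n), ?_⟩
  rw [he.iInter_comp]
  ext a
  simp only [Set.mem_iInter, Set.mem_setOf_eq]
  constructor
  · rintro ⟨h1, h2⟩ ⟨⟨u, hu⟩, v⟩ heq
    exact hu (h1 u (h2 u v heq))
  · intro h
    have h1 : ∀ u : Fin k → ℤ, (∑ i, (u i : ℝ) * a i) = 0 → u = 0 := by
      intro u hsum
      by_contra hu
      apply h ⟨⟨u, hu⟩, 0⟩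
      simpa using hsum
    refine ⟨h1, ?_⟩
    intro u v heq
    by_contra h0
    have hu : u ≠ 0 := fun h' => h0 (by simp [h'] at heq ⊢)
    exact h ⟨⟨u, hu⟩, v⟩ heq
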